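/- Let G be a finite simple graph without isolated vertices, with maximum degree Δ, and let a < 0 be a real number. Then ISD_a(G) ≤ (1/2)·Δ^{-a}·AG(G), and equality holds if and only if G is regular. -/

import Mathlib

open Finset Real

lemma key (a x y D : ℝ) (ha : a < 0) (hx : 1 ≤ x) (hy : 1 ≤ y) (hxD : x ≤ D) (hyD : y ≤ D) :
    1/(x^a + y^a) ≤ 1/2 * D^(-a) * ((x+y)/(2*Real.sqrt (x*y))) ∧
    (1/(x^a+y^a) = 1/2 * D^(-a) * ((x+y)/(2*Real.sqrt (x*y))) → x = D ∧ y = D) := by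
  have hx0 : (0:ℝ) < x := lt_of_lt_of_le one_pos hx
  have hy0 : (0:ℝ) < y := lt_of_lt_of_le one_pos hy
  have hD0 : (0:ℝ) < D := lt_of_lt_of_le hx0 hxD
  have hxa : D^a ≤ x^a := Real.rpow_le_rpow_of_nonpos hx0 hxD ha.le
  have hya : D^a ≤ y^a := Real.rpow_le_rpow_of_nonpos hy0 hyD ha.le
  have hDa : (0:ℝ) < D^a := Real.rpow_pos_of_pos hD0 a
  have hsum : 2 * D^a ≤ x^a + y^a := by linarith
  have hs0 : (0:ℝ) < x^a + y^a := by linarith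
  have h1 : 1/(x^a + y^a) ≤ 1/(2 * D^a) := by
    apply one_div_le_one_div_of_le (by linarith) hsum
  have hneg : D^(-a) = (D^a)⁻¹ := Real.rpow_neg hD0.le a
  have hc : 1/2 * D^(-a) = 1/(2 * D^a) := by rw [hneg]; field_simp
  have hs : Real.sqrt (x*y) > 0 := Real.sqrt_pos.2 (by positivity)
  have hsq : Real.sqrt (x*y) ^ 2 = x * y := Real.sq_sqrt (by positivity)
  have hg1 : 1 ≤ (x+y)/(2*Real.sqrt (x*y)) := by
    rw [le_div_iff₀ (by positivity)]
    nlinarith [sq_nonneg (x - y), sq_nonneg (Real.sqrt (x*y)), hsq]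
  constructor
  · calc 1/(x^a + y^a) ≤ 1/(2 * D^a) := h1
      _ = 1/2 * D^(-a) * 1 := by rw [hc, mul_one]
      _ ≤ 1/2 * D^(-a) * ((x+y)/(2*Real.sqrt (x*y))) := by
          apply mul_le_mul_of_nonneg_left hg1 (by positivity)
  · intro heq
    have hcpos : (0:ℝ) < 1/2 * D^(-a) := by positivity
    have h2 : 1/2 * D^(-a) * ((x+y)/(2*Real.sqrt (x*y))) ≥ 1/2 * D^(-a) * 1 :=
      mul_le_mul_of_nonneg_left hg1 hcpos.le
    have h3 : 1/(x^a+y^a) = 1/(2*D^a) := by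
      rw [hc, mul_one] at h2
      rw [heq, hc] at h1
      rw [heq, hc]
      linarith
    have h4 : x^a + y^a = 2 * D^a := by
      field_simp at h3
      linarith
    have hxa' : x^a = D^a := by linarith
    have hya' : y^a = D^a := by linarith
    constructor
    · by_contra hne
      have : x < D := lt_of_le_of_ne hxD hne
      exact absurd hxa' (ne_of_gt (Real.rpow_lt_rpow_of_neg hx0 this ha))
    · by_contra hne
      have : y < D := lt_of_le_of_ne hyD hne
      exact absurd hya' (ne_of_gt (Real.rpow_lt_rpow_of_neg hy0 this ha))

/-- The variable inverse sum deg index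
`ISD_a(G) = Σ_{uv ∈ E(G)} 1/(d_u^a + d_v^a)`. -/
noncomputable def ISD {V : Type*} [Fintype V] [DecidableEq V] (G : SimpleGraph V)
    [DecidableRel G.Adj] (a : ℝ) : ℝ :=
  ∑ e ∈ G.edgeFinset,
    Sym2.lift ⟨fun u v => 1 / ((G.degree u : ℝ) ^ a + (G.degree v : ℝ) ^ a),
      fun u v => by simp [add_comm]⟩ e

/-- The arithmetic-geometric index `AG(G) = Σ_{uv ∈ E(G)} (d_u + d_v)/(2√(d_u d_v))`. -/
noncomputable def arithGeomIndex {V : Type*} [Fintype V] [DecidableEq V] (G : SimpleGraph V)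
    [DecidableRel G.Adj] : ℝ :=
  ∑ e ∈ G.edgeFinset,
    Sym2.lift ⟨fun u v => ((G.degree u : ℝ) + (G.degree v : ℝ)) /
        (2 * Real.sqrt ((G.degree u : ℝ) * (G.degree v : ℝ))),
      fun u v => by dsimp only; rw [mul_comm ((G.degree u : ℝ)), add_comm ((G.degree u : ℝ))]⟩ e

theorem stmt_12 {V : Type*} [Fintype V] [DecidableEq V] [Nonempty V] (G : SimpleGraph V)
    [DecidableRel G.Adj] (hiso : ∀ v : V, 0 < G.degree v) (a : ℝ) (ha : a < 0) :
    ((ISD G a ≤ 1 / 2 * (G.maxDegree : ℝ) ^ (-a) * arithGeomIndex G) ∧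
    (ISD G a = 1 / 2 * (G.maxDegree : ℝ) ^ (-a) * arithGeomIndex G ↔ ∃ k, ∀ v : V, G.degree v = k)) := by
  classical
  set D : ℝ := (G.maxDegree : ℝ) with hD
  have hdeg1 : ∀ v : V, (1:ℝ) ≤ (G.degree v : ℝ) := fun v => by exact_mod_cast hiso v
  have hdegD : ∀ v : V, (G.degree v : ℝ) ≤ D := fun v => by
    rw [hD]; exact_mod_cast G.degree_le_maxDegree v
  set fI : Sym2 V → ℝ := Sym2.lift ⟨fun u v => 1 / ((G.degree u : ℝ) ^ a + (G.degree v : ℝ) ^ a),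
      fun u v => by simp [add_comm]⟩ with hfI
  set fA : Sym2 V → ℝ := Sym2.lift ⟨fun u v => ((G.degree u : ℝ) + (G.degree v : ℝ)) /
        (2 * Real.sqrt ((G.degree u : ℝ) * (G.degree v : ℝ))),
      fun u v => by dsimp only; rw [mul_comm ((G.degree u : ℝ)), add_comm ((G.degree u : ℝ))]⟩
    with hfA
  have hISD : ISD G a = ∑ e ∈ G.edgeFinset, fI e := rfl
  have hAG : arithGeomIndex G = ∑ e ∈ G.edgeFinset, fA e := rfl
  have hle : ∀ e ∈ G.edgeFinset, fI e ≤ 1/2 * D^(-a) * fA e := by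
    intro e
    refine Sym2.ind (fun u v _ => ?_) e
    rw [hfI, hfA, Sym2.lift_mk, Sym2.lift_mk]
    exact (key a _ _ D ha (hdeg1 u) (hdeg1 v) (hdegD u) (hdegD v)).1
  have hmain : ISD G a ≤ 1/2 * D^(-a) * arithGeomIndex G := by
    rw [hISD, hAG, Finset.mul_sum]
    exact Finset.sum_le_sum hle
  refine ⟨hmain, ?_, ?_⟩
  · intro heq
    refine ⟨G.maxDegree, fun v => ?_⟩
    obtain ⟨u, hu⟩ := Finset.card_pos.mp (hiso v)
    have hadj : G.Adj v u := by simpa using hu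
    have hmem : s(v,u) ∈ G.edgeFinset := by
      rw [SimpleGraph.mem_edgeFinset, SimpleGraph.mem_edgeSet]; exact hadj
    have heq' : ∑ e ∈ G.edgeFinset, fI e = ∑ e ∈ G.edgeFinset, 1/2 * D^(-a) * fA e := by
      rw [← hISD, ← Finset.mul_sum, ← hAG]; exact heq
    have hall := (Finset.sum_eq_sum_iff_of_le hle).mp heq' s(v,u) hmem
    rw [hfI, hfA, Sym2.lift_mk, Sym2.lift_mk] at hall
    have hvd := ((key a _ _ D ha (hdeg1 v) (hdeg1 u) (hdegD v) (hdegD u)).2 hall).1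
    rw [hD] at hvd
    exact_mod_cast hvd
  · rintro ⟨k, hk⟩
    have hDk : G.maxDegree = k :=
      le_antisymm (G.maxDegree_le_of_forall_degree_le k (fun v => (hk v).le))
        ((hk (Classical.arbitrary V)) ▸ G.degree_le_maxDegree (Classical.arbitrary V))
    have hk0 : (0:ℝ) < (k:ℝ) := by
      have := hiso (Classical.arbitrary V)
      rw [hk (Classical.arbitrary V)] at this
      exact_mod_cast this
    rw [hISD, hAG, Finset.mul_sum]
    apply Finset.sum_congr rfl
    intro e _
    refine Sym2.ind (fun u v => ?_) e
    rw [hfI, hfA, Sym2.lift_mk, Sym2.lift_mk]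
    dsimp only
    rw [hk u, hk v, hD, hDk, Real.sqrt_mul_self hk0.le, Real.rpow_neg hk0.le]
    have hka : (0:ℝ) < (k:ℝ)^a := Real.rpow_pos_of_pos hk0 a
    field_simp
    ring
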